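/- Let p, q be primes. The groups ℤ[1/p] × ℤ[1/p] and ℤ[1/q] × ℤ[1/q] are isomorphic (as abelian groups) if and only if p = q. -/

import Mathlib

/-- `ℤ[1/p]` as an additive subgroup of `ℚ`: the subgroup of rationals of the form
`j/p^k` with `j ∈ ℤ`, `k ∈ ℕ`. -/
def zInvPow (p : ℕ) : AddSubgroup ℚ :=
  AddSubgroup.closure {q : ℚ | ∃ j : ℤ, ∃ k : ℕ, q = (j : ℚ) / (p : ℚ) ^ k}

lemma mem_zInvPow_iff {p : ℕ} (hp : p ≠ 0) {x : ℚ} :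
    x ∈ zInvPow p ↔ ∃ j : ℤ, ∃ k : ℕ, x = (j : ℚ) / (p : ℚ) ^ k := by
  have hp' : (p : ℚ) ≠ 0 := by exact_mod_cast hp
  constructor
  · intro hx
    induction hx using AddSubgroup.closure_induction with
    | mem y hy => exact hy
    | zero => exact ⟨0, 0, by simp⟩
    | add a b _ _ ha hb =>
      obtain ⟨j1, k1, rfl⟩ := ha
      obtain ⟨j2, k2, rfl⟩ := hb
      exact ⟨j1 * p ^ k2 + j2 * p ^ k1, k1 + k2, by push_cast; rw [pow_add]; field_simp⟩
    | neg a _ ha =>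
      obtain ⟨j, k, rfl⟩ := ha
      exact ⟨-j, k, by push_cast; ring⟩
  · intro h
    exact AddSubgroup.subset_closure h

lemma zInvPow_div {p : ℕ} (hp : p ≠ 0) (x : zInvPow p) :
    ∃ y : zInvPow p, p • y = x := by
  have hp' : (p : ℚ) ≠ 0 := by exact_mod_cast hp
  obtain ⟨j, k, hjk⟩ := (mem_zInvPow_iff hp).mp x.2
  refine ⟨⟨(j : ℚ) / (p : ℚ) ^ (k + 1), (mem_zInvPow_iff hp).mpr ⟨j, k + 1, rfl⟩⟩, ?_⟩
  ext
  push_cast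
  rw [hjk]
  rw [pow_succ, nsmul_eq_mul]
  field_simp

theorem zInvPow_prod_iso_iff (p q : ℕ) (hp : p.Prime) (hq : q.Prime) :
    Nonempty ((zInvPow p × zInvPow p) ≃+ (zInvPow q × zInvPow q)) ↔ p = q := by
  constructor
  · rintro ⟨e⟩
    have hp0 : p ≠ 0 := hp.ne_zero
    have hq0 : q ≠ 0 := hq.ne_zero
    have hp' : (p : ℚ) ≠ 0 := by exact_mod_cast hp0
    have hq' : (q : ℚ) ≠ 0 := by exact_mod_cast hq0
    -- the element (1,0) of the target
    have h1 : (1 : ℚ) ∈ zInvPow q := (mem_zInvPow_iff hq0).mpr ⟨1, 0, by simp⟩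
    set t : zInvPow q × zInvPow q := (⟨1, h1⟩, 0) with ht
    -- its preimage is divisible by p
    obtain ⟨y1, hy1⟩ := zInvPow_div hp0 (e.symm t).1
    obtain ⟨y2, hy2⟩ := zInvPow_div hp0 (e.symm t).2
    have hdiv : p • e (y1, y2) = t := by
      rw [← map_nsmul]
      have : p • (y1, y2) = e.symm t := by
        ext
        · simpa using congrArg Subtype.val hy1
        · simpa using congrArg Subtype.val hy2
      rw [this, e.apply_symm_apply]
    -- first coordinate: 1 = p * z with z ∈ ℤ[1/q]
    have h1eq : (1 : ℚ) = p * ((e (y1, y2)).1 : ℚ) := by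
      have := congrArg (fun z => ((z.1 : ℚ)) ) hdiv
      simp only [ht] at this
      rw [← this]
      simp [Prod.smul_fst, nsmul_eq_mul]
    have hz : ((e (y1, y2)).1 : ℚ) = 1 / p := by
      field_simp at h1eq ⊢
      linarith
    obtain ⟨j, k, hjk⟩ := (mem_zInvPow_iff hq0).mp (e (y1, y2)).1.2
    rw [hz] at hjk
    have key : ((q : ℤ) : ℚ) ^ k = ((j * p : ℤ) : ℚ) := by
      push_cast
      field_simp at hjk
      linarith
    have keyZ : (q : ℤ) ^ k = j * p := by exact_mod_cast key
    have hdvd : (p : ℤ) ∣ (q : ℤ) ^ k := ⟨j, by linarith⟩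
    have hdvdN : p ∣ q ^ k := by exact_mod_cast hdvd
    exact (Nat.prime_dvd_prime_iff_eq hp hq).mp (hp.dvd_of_dvd_pow hdvdN)
  · rintro rfl
    exact ⟨AddEquiv.refl _⟩
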